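/- Let μ, λ ≥ 0 with λ + μ ≤ 1, and suppose X, X' ~ Poisson(μ) and Y, Y' ~ Poisson(λ) are mutually independent. Then Δ := E[|X−Y| + |X'−Y'| − |X−X'| − |Y−Y'|] ≥ (1/20)·(λ−μ)². -/

import Mathlib

open MeasureTheory ProbabilityTheory
open scoped ENNReal NNReal

noncomputable def poissonRealMeasure (m : ℝ) : Measure ℝ :=
  Measure.sum fun k : ℕ =>
    ENNReal.ofReal (Real.exp (-m) * m ^ k / (Nat.factorial k : ℝ)) • Measure.dirac (k : ℝ)

namespace PoissonGap

noncomputable def a (p : ℝ) (j : ℕ) : ℝ := Real.exp (-p) * p ^ j / (Nat.factorial j : ℝ)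

lemma a_nonneg {p : ℝ} (hp : 0 ≤ p) (j : ℕ) : 0 ≤ a p j := by
  unfold a; positivity

lemma hasSum_a {p : ℝ} (hp : 0 ≤ p) : HasSum (a p) 1 := by
  have := poissonPMFRealSum ⟨p, hp⟩
  exact this

lemma summable_a {p : ℝ} (hp : 0 ≤ p) : Summable (a p) := (hasSum_a hp).summable

lemma tsum_a {p : ℝ} (hp : 0 ≤ p) : ∑' j, a p j = 1 := (hasSum_a hp).tsum_eq

lemma two_pow_le_two_mul_factorial : ∀ i : ℕ, 2^i ≤ 2 * Nat.factorial i := by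
  intro i
  match i with
  | 0 => norm_num
  | Nat.succ n =>
    induction n with
    | zero => norm_num
    | succ k ihk =>
      calc 2^(k+2) = 2 * 2^(k+1) := by ring
        _ ≤ 2 * (2 * Nat.factorial (k+1)) := by
            have h := ihk; simp only [Nat.succ_eq_add_one] at h; omega
        _ ≤ 2 * ((k+2) * Nat.factorial (k+1)) := by
            have := Nat.factorial_pos (k+1); nlinarith
        _ = 2 * Nat.factorial (k+2) := by rw [Nat.factorial_succ (k+1)]

lemma a_le {p : ℝ} (hp : 0 ≤ p) (hp1 : p ≤ 1) (j : ℕ) : a p j ≤ 2 * (1/2)^j := by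
  have h1 : a p j ≤ 1 / (Nat.factorial j : ℝ) := by
    unfold a
    have h2 : Real.exp (-p) ≤ 1 := Real.exp_le_one_iff.mpr (by linarith)
    have h3 : p ^ j ≤ 1 := pow_le_one₀ hp hp1
    have h4 : (0:ℝ) < (Nat.factorial j : ℝ) := by positivity
    have h5 : Real.exp (-p) * p ^ j ≤ 1 := by
      nlinarith [Real.exp_pos (-p), pow_nonneg hp j]
    gcongr
  have h5 : (2:ℝ)^j ≤ 2 * (Nat.factorial j : ℝ) := by
    exact_mod_cast two_pow_le_two_mul_factorial j
  have h4 : (0:ℝ) < (Nat.factorial j : ℝ) := by positivity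
  have h6 : (0:ℝ) < (2:ℝ)^j := by positivity
  calc a p j ≤ 1 / (Nat.factorial j : ℝ) := h1
    _ ≤ 2 / 2^j := by rw [div_le_div_iff₀ h4 h6]; linarith
    _ = 2 * (1/2)^j := by rw [div_pow, one_pow]; ring
noncomputable def c (p : ℝ) (j : ℕ) : ℝ≥0∞ := ENNReal.ofReal (a p j)

lemma tsum_c {p : ℝ} (hp : 0 ≤ p) : ∑' j, c p j = 1 := by
  simp only [c]
  rw [show (1:ℝ≥0∞) = ENNReal.ofReal 1 by simp, ← tsum_a hp,
    ← ENNReal.ofReal_tsum_of_nonneg (a_nonneg hp) (summable_a hp)]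

lemma lintegral_poisson (p : ℝ) (f : ℝ → ℝ≥0∞) :
    ∫⁻ x, f x ∂(poissonRealMeasure p) = ∑' j : ℕ, c p j * f j := by
  rw [poissonRealMeasure, lintegral_sum_measure]
  exact tsum_congr fun j => by rw [lintegral_smul_measure, lintegral_dirac]; rfl

lemma isProbability {p : ℝ} (hp : 0 ≤ p) : IsProbabilityMeasure (poissonRealMeasure p) := by
  constructor
  rw [← lintegral_one, lintegral_poisson]
  simp [tsum_c hp]

noncomputable def T (p q : ℝ) : ℝ≥0∞ :=
  ∑' j : ℕ, c p j * ∑' k : ℕ, c q k * ENNReal.ofReal |(j:ℝ) - (k:ℝ)|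

lemma lintegral_abs_sub {Ω : Type*} [MeasurableSpace Ω] (μ : Measure Ω) [IsProbabilityMeasure μ]
    {p q : ℝ} (hp : 0 ≤ p) (hq : 0 ≤ q) {U V : Ω → ℝ} (hU : Measurable U) (hV : Measurable V)
    (hUV : IndepFun U V μ) (hu : μ.map U = poissonRealMeasure p)
    (hv : μ.map V = poissonRealMeasure q) :
    ∫⁻ ω, ENNReal.ofReal |U ω - V ω| ∂μ = T p q := by
  haveI := isProbability hp; haveI := isProbability hq
  have hmap : μ.map (fun ω => (U ω, V ω)) = (poissonRealMeasure p).prod (poissonRealMeasure q) := by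
    rw [← hu, ← hv]
    exact (indepFun_iff_map_prod_eq_prod_map_map hU.aemeasurable hV.aemeasurable).mp hUV
  have hmeas : Measurable (fun z : ℝ × ℝ => ENNReal.ofReal |z.1 - z.2|) := by
    apply ENNReal.measurable_ofReal.comp
    exact (measurable_fst.sub measurable_snd).abs
  calc ∫⁻ ω, ENNReal.ofReal |U ω - V ω| ∂μ
      = ∫⁻ z, ENNReal.ofReal |z.1 - z.2| ∂(μ.map (fun ω => (U ω, V ω))) :=
        (lintegral_map hmeas (hU.prodMk hV)).symm
    _ = ∫⁻ x, ∫⁻ y, ENNReal.ofReal |x - y| ∂(poissonRealMeasure q) ∂(poissonRealMeasure p) := by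
        rw [hmap]; exact lintegral_prod _ hmeas.aemeasurable
    _ = T p q := by
        rw [lintegral_poisson]
        exact tsum_congr fun j => by rw [lintegral_poisson]

lemma tsum_band (j k : ℕ) (hjk : j ≤ k) :
    ∑' t : ℕ, ((if j ≤ t ∧ t < k then (1:ℝ≥0∞) else 0) + (if k ≤ t ∧ t < j then 1 else 0))
      = ((k - j : ℕ) : ℝ≥0∞) := by
  have h2 : ∀ t, (if k ≤ t ∧ t < j then (1:ℝ≥0∞) else 0) = 0 := by
    intro t; rw [if_neg]; rintro ⟨h1, h2⟩; omega
  simp only [h2, add_zero]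
  rw [tsum_eq_sum (s := Finset.Ico j k)
    (fun t ht => if_neg (fun hc => ht (Finset.mem_Ico.mpr hc)))]
  rw [Finset.sum_congr rfl (fun t ht => if_pos (Finset.mem_Ico.mp ht)),
    Finset.sum_const, Nat.card_Ico, nsmul_eq_mul, mul_one]

lemma ofReal_abs_natCast_sub (j k : ℕ) :
    ENNReal.ofReal |(j:ℝ) - (k:ℝ)| =
      ∑' t : ℕ, ((if j ≤ t ∧ t < k then (1:ℝ≥0∞) else 0) + (if k ≤ t ∧ t < j then 1 else 0)) := by
  rcases le_total j k with h | h
  · rw [tsum_band j k h]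
    have habs : |(j:ℝ) - (k:ℝ)| = ((k - j : ℕ) : ℝ) := by
      rw [abs_sub_comm, abs_of_nonneg (sub_nonneg.mpr (Nat.cast_le.mpr h)), Nat.cast_sub h]
    rw [habs, ENNReal.ofReal_natCast]
  · rw [tsum_congr (fun t => add_comm (if j ≤ t ∧ t < k then (1:ℝ≥0∞) else 0)
      (if k ≤ t ∧ t < j then 1 else 0)), tsum_band k j h]
    have habs : |(j:ℝ) - (k:ℝ)| = ((j - k : ℕ) : ℝ) := by
      rw [abs_of_nonneg (sub_nonneg.mpr (Nat.cast_le.mpr h)), Nat.cast_sub h]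
    rw [habs, ENNReal.ofReal_natCast]

noncomputable def CP (p : ℝ) (t : ℕ) : ℝ≥0∞ := ∑ j ∈ Finset.range (t+1), c p j
noncomputable def CR (p : ℝ) (t : ℕ) : ℝ≥0∞ := ∑' j : ℕ, c p (j + (t+1))

lemma tsum_c_le (p : ℝ) (t : ℕ) :
    ∑' j : ℕ, c p j * (if j ≤ t then (1:ℝ≥0∞) else 0) = CP p t := by
  have hrw : ∀ j : ℕ, c p j * (if j ≤ t then (1:ℝ≥0∞) else 0) = if j ≤ t then c p j else 0 :=
    fun j => by rw [mul_ite, mul_one, mul_zero]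
  rw [tsum_congr hrw]
  rw [tsum_eq_sum (s := Finset.range (t+1))
    (fun j hj => if_neg (fun hc => hj (Finset.mem_range.mpr (by omega))))]
  exact Finset.sum_congr rfl (fun j hj => if_pos (by have := Finset.mem_range.mp hj; omega))

lemma tsum_c_gt (p : ℝ) (t : ℕ) :
    ∑' j : ℕ, c p j * (if t < j then (1:ℝ≥0∞) else 0) = CR p t := by
  have hrw : ∀ j : ℕ, c p j * (if t < j then (1:ℝ≥0∞) else 0) = if t < j then c p j else 0 :=
    fun j => by rw [mul_ite, mul_one, mul_zero]
  rw [tsum_congr hrw]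
  have hinj : Function.Injective (fun x : ℕ => x + (t+1)) := fun x y h => by simpa using h
  have hsupp : Function.support (fun j : ℕ => if t < j then c p j else 0) ⊆
      Set.range (fun x : ℕ => x + (t+1)) := by
    intro j hj
    have hj' : t < j := by
      by_contra hc
      exact hj (if_neg hc)
    exact ⟨j - (t+1), by simp; omega⟩
  rw [← hinj.tsum_eq hsupp]
  exact tsum_congr fun x => if_pos (by omega)

lemma double_sum (p q : ℝ) (t : ℕ) :
    (∑' j : ℕ, ∑' k : ℕ, c p j * c q k *
      ((if j ≤ t ∧ t < k then (1:ℝ≥0∞) else 0) + (if k ≤ t ∧ t < j then 1 else 0)))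
      = CP p t * CR q t + CP q t * CR p t := by
  have hsplit : ∀ j k : ℕ, c p j * c q k *
      ((if j ≤ t ∧ t < k then (1:ℝ≥0∞) else 0) + (if k ≤ t ∧ t < j then 1 else 0))
      = (c p j * (if j ≤ t then 1 else 0)) * (c q k * (if t < k then 1 else 0))
        + (c p j * (if t < j then 1 else 0)) * (c q k * (if k ≤ t then 1 else 0)) := by
    intro j k
    have hand : ∀ (A B : Prop) [Decidable A] [Decidable B],
        (if A ∧ B then (1:ℝ≥0∞) else 0) = (if A then 1 else 0) * (if B then 1 else 0) := by
      intro A B _ _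
      by_cases hA : A <;> by_cases hB : B <;> simp [hA, hB]
    rw [hand, hand]
    ring
  calc ∑' j : ℕ, ∑' k : ℕ, c p j * c q k *
        ((if j ≤ t ∧ t < k then (1:ℝ≥0∞) else 0) + (if k ≤ t ∧ t < j then 1 else 0))
      = ∑' j : ℕ, ((c p j * (if j ≤ t then 1 else 0)) * ∑' k : ℕ, (c q k * (if t < k then 1 else 0))
          + (c p j * (if t < j then 1 else 0)) * ∑' k : ℕ, (c q k * (if k ≤ t then 1 else 0))) := by
        refine tsum_congr fun j => ?_
        rw [tsum_congr (hsplit j), Summable.tsum_add ENNReal.summable ENNReal.summable,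
          ENNReal.tsum_mul_left, ENNReal.tsum_mul_left]
    _ = CP p t * CR q t + CP q t * CR p t := by
        rw [Summable.tsum_add ENNReal.summable ENNReal.summable, ENNReal.tsum_mul_right,
          ENNReal.tsum_mul_right, tsum_c_le, tsum_c_gt, tsum_c_le, tsum_c_gt]
        ring

lemma T_eq (p q : ℝ) : T p q = ∑' t : ℕ, (CP p t * CR q t + CP q t * CR p t) := by
  unfold T
  calc ∑' j : ℕ, c p j * ∑' k : ℕ, c q k * ENNReal.ofReal |(j:ℝ) - (k:ℝ)|
      = ∑' j : ℕ, ∑' k : ℕ, ∑' t : ℕ, (c p j * c q k *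
          ((if j ≤ t ∧ t < k then (1:ℝ≥0∞) else 0) + (if k ≤ t ∧ t < j then 1 else 0))) := by
        refine tsum_congr fun j => ?_
        rw [← ENNReal.tsum_mul_left]
        refine tsum_congr fun k => ?_
        rw [← mul_assoc, ofReal_abs_natCast_sub j k, ENNReal.tsum_mul_left]
    _ = ∑' t : ℕ, ∑' j : ℕ, ∑' k : ℕ, (c p j * c q k *
          ((if j ≤ t ∧ t < k then (1:ℝ≥0∞) else 0) + (if k ≤ t ∧ t < j then 1 else 0))) := by
        calc ∑' j : ℕ, ∑' k : ℕ, ∑' t : ℕ, (c p j * c q k *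
              ((if j ≤ t ∧ t < k then (1:ℝ≥0∞) else 0) + (if k ≤ t ∧ t < j then 1 else 0)))
            = ∑' j : ℕ, ∑' t : ℕ, ∑' k : ℕ, (c p j * c q k *
              ((if j ≤ t ∧ t < k then (1:ℝ≥0∞) else 0) + (if k ≤ t ∧ t < j then 1 else 0))) :=
              tsum_congr fun j => ENNReal.tsum_comm
          _ = ∑' t : ℕ, ∑' j : ℕ, ∑' k : ℕ, (c p j * c q k *
              ((if j ≤ t ∧ t < k then (1:ℝ≥0∞) else 0) + (if k ≤ t ∧ t < j then 1 else 0))) :=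
              ENNReal.tsum_comm
    _ = ∑' t : ℕ, (CP p t * CR q t + CP q t * CR p t) := tsum_congr fun t => double_sum p q t

lemma CP_le_one {p : ℝ} (hp : 0 ≤ p) (t : ℕ) : CP p t ≤ 1 := by
  rw [← tsum_c hp]; exact ENNReal.sum_le_tsum _

lemma summable_geom_aux (t : ℕ) : Summable (fun j : ℕ => 2 * (1/2:ℝ)^(j+(t+1))) := by
  apply Summable.mul_left
  exact ((summable_geometric_two).comp_injective (add_left_injective (t+1)))

lemma CR_le {p : ℝ} (hp : 0 ≤ p) (hp1 : p ≤ 1) (t : ℕ) :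
    CR p t ≤ ENNReal.ofReal (2 * (1/2)^t) := by
  unfold CR
  calc ∑' j : ℕ, c p (j+(t+1)) ≤ ∑' j : ℕ, ENNReal.ofReal (2 * (1/2)^(j+(t+1))) :=
      ENNReal.tsum_le_tsum fun j => ENNReal.ofReal_le_ofReal (a_le hp hp1 _)
    _ = ENNReal.ofReal (∑' j : ℕ, 2 * (1/2:ℝ)^(j+(t+1))) :=
      (ENNReal.ofReal_tsum_of_nonneg (fun j => by positivity) (summable_geom_aux t)).symm
    _ ≤ ENNReal.ofReal (2 * (1/2)^t) := by
      apply ENNReal.ofReal_le_ofReal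
      have : ∑' j : ℕ, 2 * (1/2:ℝ)^(j+(t+1)) = 2 * (1/2)^(t+1) * ∑' j : ℕ, (1/2:ℝ)^j := by
        rw [← tsum_mul_left]
        exact tsum_congr fun j => by rw [pow_add]; ring
      rw [this, tsum_geometric_two]
      rw [pow_succ]
      ring_nf
      linarith [pow_nonneg (by norm_num : (0:ℝ) ≤ 1/2) t]

lemma T_ne_top {p q : ℝ} (hp : 0 ≤ p) (hq : 0 ≤ q) (hp1 : p ≤ 1) (hq1 : q ≤ 1) :
    T p q ≠ ⊤ := by
  rw [T_eq]
  have hb : ∀ t : ℕ, CP p t * CR q t + CP q t * CR p t ≤ ENNReal.ofReal (4 * (1/2)^t) := by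
    intro t
    have h1 : CP p t * CR q t ≤ 1 * ENNReal.ofReal (2 * (1/2)^t) :=
      mul_le_mul' (CP_le_one hp t) (CR_le hq hq1 t)
    have h2 : CP q t * CR p t ≤ 1 * ENNReal.ofReal (2 * (1/2)^t) :=
      mul_le_mul' (CP_le_one hq t) (CR_le hp hp1 t)
    rw [one_mul] at h1 h2
    calc CP p t * CR q t + CP q t * CR p t
        ≤ ENNReal.ofReal (2 * (1/2)^t) + ENNReal.ofReal (2 * (1/2)^t) := add_le_add h1 h2
      _ = ENNReal.ofReal (4 * (1/2)^t) := by
          rw [← ENNReal.ofReal_add (by positivity) (by positivity)]; ring_nf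
  apply ne_top_of_le_ne_top ?_ (ENNReal.tsum_le_tsum hb)
  rw [← ENNReal.ofReal_tsum_of_nonneg (fun t => by positivity)
    (summable_geometric_two.mul_left 4)]
  exact ENNReal.ofReal_ne_top

noncomputable def P (p : ℝ) (t : ℕ) : ℝ := ∑ j ∈ Finset.range (t+1), a p j
noncomputable def R (p : ℝ) (t : ℕ) : ℝ := ∑' j : ℕ, a p (j + (t+1))
noncomputable def f (p q : ℝ) (t : ℕ) : ℝ := P p t * R q t + P q t * R p t

lemma summable_tail {p : ℝ} (hp : 0 ≤ p) (t : ℕ) : Summable (fun j : ℕ => a p (j+(t+1))) :=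
  (summable_nat_add_iff (t+1)).mpr (summable_a hp)

lemma P_nonneg {p : ℝ} (hp : 0 ≤ p) (t : ℕ) : 0 ≤ P p t :=
  Finset.sum_nonneg fun j _ => a_nonneg hp j

lemma R_nonneg {p : ℝ} (hp : 0 ≤ p) (t : ℕ) : 0 ≤ R p t :=
  tsum_nonneg fun j => a_nonneg hp _

lemma f_nonneg {p q : ℝ} (hp : 0 ≤ p) (hq : 0 ≤ q) (t : ℕ) : 0 ≤ f p q t := by
  unfold f
  have := P_nonneg hp t; have := P_nonneg hq t
  have := R_nonneg hp t; have := R_nonneg hq t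
  positivity

lemma P_add_R {p : ℝ} (hp : 0 ≤ p) (t : ℕ) : P p t + R p t = 1 := by
  have h := Summable.sum_add_tsum_nat_add (f := a p) (t+1) (summable_a hp)
  rw [tsum_a hp] at h
  exact h

lemma CP_eq {p : ℝ} (hp : 0 ≤ p) (t : ℕ) : CP p t = ENNReal.ofReal (P p t) := by
  unfold CP P c
  rw [ENNReal.ofReal_sum_of_nonneg (fun j _ => a_nonneg hp j)]

lemma CR_eq {p : ℝ} (hp : 0 ≤ p) (t : ℕ) : CR p t = ENNReal.ofReal (R p t) := by
  unfold CR R c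
  rw [ENNReal.ofReal_tsum_of_nonneg (fun j => a_nonneg hp _) (summable_tail hp t)]

lemma F_eq {p q : ℝ} (hp : 0 ≤ p) (hq : 0 ≤ q) (t : ℕ) :
    CP p t * CR q t + CP q t * CR p t = ENNReal.ofReal (f p q t) := by
  rw [CP_eq hp, CP_eq hq, CR_eq hp, CR_eq hq,
    ← ENNReal.ofReal_mul (P_nonneg hp t), ← ENNReal.ofReal_mul (P_nonneg hq t),
    ← ENNReal.ofReal_add (by have := P_nonneg hp t; have := R_nonneg hq t; positivity)
      (by have := P_nonneg hq t; have := R_nonneg hp t; positivity)]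
  rfl

lemma toReal_T {p q : ℝ} (hp : 0 ≤ p) (hq : 0 ≤ q) :
    (T p q).toReal = ∑' t : ℕ, f p q t := by
  rw [T_eq, tsum_congr (F_eq hp hq), ENNReal.tsum_toReal_eq (fun t => ENNReal.ofReal_ne_top)]
  exact tsum_congr fun t => ENNReal.toReal_ofReal (f_nonneg hp hq t)

lemma summable_f {p q : ℝ} (hp : 0 ≤ p) (hq : 0 ≤ q) (hp1 : p ≤ 1) (hq1 : q ≤ 1) :
    Summable (f p q) := by
  have h := T_ne_top hp hq hp1 hq1
  rw [T_eq, tsum_congr (F_eq hp hq)] at h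
  have := ENNReal.summable_toReal h
  exact this.congr fun t => ENNReal.toReal_ofReal (f_nonneg hp hq t)

lemma P_zero (p : ℝ) : P p 0 = Real.exp (-p) := by
  simp [P, a]

lemma exp_gap_half {m l : ℝ} (hm : 0 ≤ m) (hl1 : l ≤ 1) (hml : m ≤ l) :
    2 * (Real.exp (-m) - Real.exp (-l))^2 ≥ (1/20) * (l-m)^2 := by
  have e1 : Real.exp (-m) = Real.exp (-l) * Real.exp (l - m) := by
    rw [← Real.exp_add]; ring_nf
  have e2 : Real.exp (l-m) ≥ 1 + (l-m) := by linarith [Real.add_one_le_exp (l-m)]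
  have e3 : Real.exp (-l) ≥ Real.exp (-1) := Real.exp_le_exp.mpr (by linarith)
  have h13 : Real.exp (-1) ≥ 1/3 := by
    have hexp1 : Real.exp 1 < 2.7182818286 := Real.exp_one_lt_d9
    have hpos : 0 < Real.exp 1 := Real.exp_pos 1
    rw [Real.exp_neg, ge_iff_le, le_inv_comm₀ (by norm_num) hpos]
    linarith
  have hd : Real.exp (-m) - Real.exp (-l) ≥ (1/3) * (l - m) := by
    have h4 : Real.exp (-m) - Real.exp (-l) ≥ Real.exp (-l) * (l - m) := by nlinarith
    nlinarith [Real.exp_pos (-1)]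
  have hd0 : (0:ℝ) ≤ (1/3) * (l - m) := by linarith
  have hsq : ((1/3) * (l-m))^2 ≤ (Real.exp (-m) - Real.exp (-l))^2 := by
    apply pow_le_pow_left₀ hd0 hd
  nlinarith [sq_nonneg (l - m)]

lemma exp_gap {m l : ℝ} (hm : 0 ≤ m) (hl : 0 ≤ l) (hm1 : m ≤ 1) (hl1 : l ≤ 1) :
    2 * (Real.exp (-m) - Real.exp (-l))^2 ≥ (1/20) * (l-m)^2 := by
  rcases le_total m l with h | h
  · exact exp_gap_half hm hl1 h
  · have := exp_gap_half hl hm1 h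
    nlinarith [this]

lemma core {m l : ℝ} (hm : 0 ≤ m) (hl : 0 ≤ l) (hm1 : m ≤ 1) (hl1 : l ≤ 1) :
    2 * (T m l).toReal - (T m m).toReal - (T l l).toReal ≥ (1/20) * (l-m)^2 := by
  rw [toReal_T hm hl, toReal_T hm hm, toReal_T hl hl]
  have hsml := summable_f hm hl hm1 hl1
  have hsmm := summable_f hm hm hm1 hm1
  have hsll := summable_f hl hl hl1 hl1
  have hkey : ∀ t, 2 * f m l t - f m m t - f l l t = 2 * (P m t - P l t)^2 := by
    intro t
    have h1 := P_add_R hm t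
    have h2 := P_add_R hl t
    have hr1 : R m t = 1 - P m t := by linarith
    have hr2 : R l t = 1 - P l t := by linarith
    unfold f
    rw [hr1, hr2]
    ring
  have hcomb : Summable (fun t => 2 * (P m t - P l t)^2) := by
    apply Summable.congr (((hsml.mul_left 2).sub hsmm).sub hsll)
    intro t
    exact hkey t
  have heq : ∑' t : ℕ, (2 * (P m t - P l t)^2) =
      2 * (∑' t, f m l t) - (∑' t, f m m t) - (∑' t, f l l t) := by
    rw [← tsum_congr hkey]
    rw [Summable.tsum_sub ((hsml.mul_left 2).sub hsmm) hsll, Summable.tsum_sub (hsml.mul_left 2) hsmm,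
      tsum_mul_left]
  rw [← heq]
  have hge : ∑' t : ℕ, (2 * (P m t - P l t)^2) ≥ 2 * (P m 0 - P l 0)^2 :=
    Summable.le_tsum hcomb 0 (fun j _ => by positivity)
  have hfin : 2 * (P m 0 - P l 0)^2 ≥ (1/20) * (l-m)^2 := by
    rw [P_zero, P_zero]
    exact exp_gap hm hl hm1 hl1
  linarith

end PoissonGap

theorem poisson_expectation_gap {Ω : Type*} [MeasurableSpace Ω] (μ : Measure Ω)
    [IsProbabilityMeasure μ]
    (m l : ℝ) (hm : 0 ≤ m) (hl : 0 ≤ l) (hsum : l + m ≤ 1)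
    (X X' Y Y' : Ω → ℝ)
    (hXm : Measurable X) (hX'm : Measurable X') (hYm : Measurable Y) (hY'm : Measurable Y')
    (hindep : iIndepFun ![X, X', Y, Y'] μ)
    (hX : Measure.map X μ = poissonRealMeasure m)
    (hX' : Measure.map X' μ = poissonRealMeasure m)
    (hY : Measure.map Y μ = poissonRealMeasure l)
    (hY' : Measure.map Y' μ = poissonRealMeasure l) :
    ∫ ω, (|X ω - Y ω| + |X' ω - Y' ω| - |X ω - X' ω| - |Y ω - Y' ω|) ∂μ ≥
      (1/20) * (l - m) ^ 2 := by
  have hm1 : m ≤ 1 := by linarith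
  have hl1 : l ≤ 1 := by linarith
  have hXY : IndepFun X Y μ := by
    have := hindep.indepFun (i := 0) (j := 2) (by decide)
    simpa using this
  have hX'Y' : IndepFun X' Y' μ := by
    have := hindep.indepFun (i := 1) (j := 3) (by decide)
    simpa using this
  have hXX' : IndepFun X X' μ := by
    have := hindep.indepFun (i := 0) (j := 1) (by decide)
    simpa using this
  have hYY' : IndepFun Y Y' μ := by
    have := hindep.indepFun (i := 2) (j := 3) (by decide)
    simpa using this
  have h1 := PoissonGap.lintegral_abs_sub μ hm hl hXm hYm hXY hX hY
  have h2 := PoissonGap.lintegral_abs_sub μ hm hl hX'm hY'm hX'Y' hX' hY'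
  have h3 := PoissonGap.lintegral_abs_sub μ hm hm hXm hX'm hXX' hX hX'
  have h4 := PoissonGap.lintegral_abs_sub μ hl hl hYm hY'm hYY' hY hY'
  have hTml := PoissonGap.T_ne_top hm hl hm1 hl1
  have hTmm := PoissonGap.T_ne_top hm hm hm1 hm1
  have hTll := PoissonGap.T_ne_top hl hl hl1 hl1
  have mk : ∀ (U V : Ω → ℝ), Measurable U → Measurable V →
      (∫⁻ ω, ENNReal.ofReal |U ω - V ω| ∂μ) ≠ ⊤ →
      Integrable (fun ω => |U ω - V ω|) μ ∧
        ∫ ω, |U ω - V ω| ∂μ = (∫⁻ ω, ENNReal.ofReal |U ω - V ω| ∂μ).toReal := by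
    intro U V hU hV hfin
    have hmeas : Measurable (fun ω => |U ω - V ω|) := (hU.sub hV).abs
    have hnn : 0 ≤ᵐ[μ] (fun ω => |U ω - V ω|) :=
      Filter.Eventually.of_forall (fun ω => abs_nonneg _)
    constructor
    · refine ⟨hmeas.aestronglyMeasurable, ?_⟩
      rw [hasFiniteIntegral_iff_ofReal hnn]
      exact lt_top_iff_ne_top.mpr hfin
    · exact integral_eq_lintegral_of_nonneg_ae hnn hmeas.aestronglyMeasurable
  obtain ⟨i1, e1⟩ := mk X Y hXm hYm (h1 ▸ hTml)
  obtain ⟨i2, e2⟩ := mk X' Y' hX'm hY'm (h2 ▸ hTml)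
  obtain ⟨i3, e3⟩ := mk X X' hXm hX'm (h3 ▸ hTmm)
  obtain ⟨i4, e4⟩ := mk Y Y' hYm hY'm (h4 ▸ hTll)
  have hsplit : ∫ ω, (|X ω - Y ω| + |X' ω - Y' ω| - |X ω - X' ω| - |Y ω - Y' ω|) ∂μ =
      (∫ ω, |X ω - Y ω| ∂μ) + (∫ ω, |X' ω - Y' ω| ∂μ) - (∫ ω, |X ω - X' ω| ∂μ)
        - (∫ ω, |Y ω - Y' ω| ∂μ) := by
    have i12 : Integrable (fun ω => |X ω - Y ω| + |X' ω - Y' ω|) μ := i1.add i2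
    have i123 : Integrable (fun ω => |X ω - Y ω| + |X' ω - Y' ω| - |X ω - X' ω|) μ := i12.sub i3
    rw [integral_sub i123 i4, integral_sub i12 i3, integral_add i1 i2]
  rw [hsplit, e1, e2, e3, e4, h1, h2, h3, h4]
  have := PoissonGap.core hm hl hm1 hl1
  linarith
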